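/- Let d and t be positive integers, let G be a connected graph, and let H_1, H_2, …, H_t be vertex-disjoint connected subgraphs of G with td(H_i) ≥ d for every i ∈ [t]. Let T be a treedepth decomposition of G and let v ∈ V(G) be a vertex with v ∈ N_G(H_i) for every i ∈ [t]. If reach(v, T) < d, then height(T) ≥ t + 1. -/

import Mathlib

/-- A rooted forest on the vertex type `V`, given by a parent function.
Acyclicity guarantees that following parents never returns to a vertex. -/
structure RootedForest (V : Type*) where
  parent : V → Option V
  acyclic : ∀ v : V, ¬ Relation.TransGen (fun a b => parent a = some b) v v

namespace RootedForest

variable {V : Type*} (F : RootedForest V)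

/-- `F.Anc x y` means that `y` is an ancestor of `x` in the rooted forest `F`
(every vertex is an ancestor of itself). -/
def Anc (x y : V) : Prop :=
  Relation.ReflTransGen (fun a b => F.parent a = some b) x y

/-- `F.ProperAnc x y` means that `y` is a proper ancestor of `x`. -/
def ProperAnc (x y : V) : Prop :=
  Relation.TransGen (fun a b => F.parent a = some b) x y

/-- `x` and `y` are in ancestor–descendant relation in `F`. -/
def AncDesc (x y : V) : Prop := F.Anc x y ∨ F.Anc y x

/-- The depth of `v` in `F`: the number of vertices on the path from `v`
to the root of its tree (including both endpoints). -/
noncomputable def depth (v : V) : ℕ := Nat.card {u : V // F.Anc v u}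

/-- The height of the forest: the maximum depth of a vertex. -/
noncomputable def height : ℕ := sSup (Set.range F.depth)

/-- The reach of `v` in `F`. -/
noncomputable def reach (v : V) : ℕ := F.height - F.depth v

/-- The vertex set of the subtree of `F` rooted at `v` (all descendants of `v`,
including `v` itself). -/
def subtree (v : V) : Set V := {u : V | F.Anc u v}

/-- `x` and `y` lie in the same tree of the forest, i.e. they have a common ancestor. -/
def SameTree (x y : V) : Prop := ∃ w : V, F.Anc x w ∧ F.Anc y w

end RootedForest

/-- `F` is a treedepth decomposition of `G`: a rooted forest on the vertex set of `G`
such that the endpoints of every edge are in ancestor–descendant relation. -/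
def SimpleGraph.IsTreedepthDecomp {V : Type*} (G : SimpleGraph V) (F : RootedForest V) : Prop :=
  ∀ ⦃u v : V⦄, G.Adj u v → F.AncDesc u v

/-- The treedepth of `G`: the minimum height of a treedepth decomposition of `G`. -/
noncomputable def SimpleGraph.treedepth {V : Type*} (G : SimpleGraph V) : ℕ :=
  sInf {n : ℕ | ∃ F : RootedForest V, G.IsTreedepthDecomp F ∧ F.height = n}

/-- The open neighborhood of a vertex set `S`: all vertices outside `S`
with a neighbor in `S`. -/
def SimpleGraph.nbhdSet {V : Type*} (G : SimpleGraph V) (S : Set V) : Set V :=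
  {u : V | u ∉ S ∧ ∃ s ∈ S, G.Adj u s}

/-- `Z` is a treedepth-`η` modulator of `G`: removing `Z` leaves a graph of
treedepth at most `η`. -/
def SimpleGraph.IsTdMod {V : Type*} (G : SimpleGraph V) (η : ℕ) (Z : Set V) : Prop :=
  (G.induce Zᶜ).treedepth ≤ η

/-- `G` contains `m` pairwise internally vertex-disjoint paths between `u` and `v`. -/
def IntDisjointPaths {V : Type*} (G : SimpleGraph V) (u v : V) (m : ℕ) : Prop :=
  ∃ P : Fin m → G.Walk u v, (∀ i, (P i).IsPath) ∧
    ∀ i j, i ≠ j → ∀ w, w ∈ (P i).support → w ∈ (P j).support → w = u ∨ w = v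

/-- A treedepth decomposition is nice if every subtree induces a connected subgraph. -/
def IsNiceDecomp {V : Type*} (G : SimpleGraph V) (F : RootedForest V) : Prop :=
  ∀ v : V, (G.induce (F.subtree v)).Connected


namespace RootedForest

variable {V : Type*} (F : RootedForest V)

lemma step_rightUnique : Relator.RightUnique (fun a b : V => F.parent a = some b) := by
  intro a b c hb hc
  rw [hb] at hc
  exact Option.some.inj hc

lemma anc_total {x a b : V} (ha : F.Anc x a) (hb : F.Anc x b) : F.Anc a b ∨ F.Anc b a :=
  Relation.ReflTransGen.total_of_right_unique F.step_rightUnique ha hb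

lemma anc_eq_or_properAnc {a b : V} (h : F.Anc a b) : a = b ∨ F.ProperAnc a b := by
  rcases Relation.reflTransGen_iff_eq_or_transGen.mp h with h' | h'
  · exact Or.inl h'.symm
  · exact Or.inr h'

lemma anc_antisymm {a b : V} (h1 : F.Anc a b) (h2 : F.Anc b a) : a = b := by
  rcases F.anc_eq_or_properAnc h1 with rfl | h1'
  · rfl
  rcases F.anc_eq_or_properAnc h2 with rfl | h2'
  · rfl
  exact absurd (h1'.trans h2') (F.acyclic a)

lemma depth_eq_ncard (v : V) : F.depth v = {u : V | F.Anc v u}.ncard :=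
  Nat.card_coe_set_eq _

variable [Fintype V]

lemma depth_pos (v : V) : 0 < F.depth v :=
  have : Nonempty {u : V // F.Anc v u} := ⟨⟨v, Relation.ReflTransGen.refl⟩⟩
  Nat.card_pos

lemma properAnc_depth_lt {a b : V} (h : F.ProperAnc a b) : F.depth b < F.depth a := by
  rw [depth_eq_ncard, depth_eq_ncard]
  refine Set.ncard_lt_ncard ⟨fun u hu => h.to_reflTransGen.trans hu, fun hsub => ?_⟩
    (Set.toFinite _)
  have hba : F.Anc b a := hsub Relation.ReflTransGen.refl
  have : a = b := F.anc_antisymm h.to_reflTransGen hba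
  exact F.acyclic a (by rwa [← this] at h)

lemma depth_le_height (v : V) : F.depth v ≤ F.height :=
  le_csSup (Set.Finite.bddAbove (Set.finite_range _)) ⟨v, rfl⟩

end RootedForest


/-- Let `G` be a connected graph and `H 0, …, H (t-1)` vertex-disjoint connected
subgraphs of `G`, each of treedepth at least `d`. Let `T` be a treedepth decomposition
of `G` and let `v` be a vertex with `v ∈ N_G(H i)` for every `i`. If the reach of `v`
in `T` is less than `d`, then the height of `T` is at least `t + 1`. -/
theorem height_ge_of_small_reach {V : Type*} [Fintype V] (d t : ℕ) (hd : 1 ≤ d)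
    (ht : 1 ≤ t) (G : SimpleGraph V) (hG : G.Connected)
    (H : Fin t → G.Subgraph)
    (hconn : ∀ i, (H i).Connected)
    (hdisj : Pairwise fun i j => Disjoint (H i).verts (H j).verts)
    (htd : ∀ i, d ≤ (H i).coe.treedepth)
    (T : RootedForest V) (hT : G.IsTreedepthDecomp T)
    (v : V) (hv : ∀ i, v ∈ G.nbhdSet (H i).verts)
    (hreach : T.reach v < d) :
    t + 1 ≤ T.height := by
  classical
  -- Step A: each `H i` contains a proper ancestor of `v`.
  have key : ∀ i, ∃ w, w ∈ (H i).verts ∧ T.ProperAnc v w := by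
    intro i
    by_contra hno
    push_neg at hno
    obtain ⟨hvout, u, hu, hadj⟩ := hv i
    set S : Set V := (H i).verts with hSdef
    -- any vertex of S that is an ancestor of v is a proper ancestor: impossible
    have toProper : ∀ c : V, c ∈ S → T.Anc c v → T.ProperAnc c v := by
      intro c hc hcv
      rcases T.anc_eq_or_properAnc hcv with rfl | h
      · exact absurd hc hvout
      · exact h
    have notAncv : ∀ c : V, c ∈ S → ¬ T.Anc v c := by
      intro c hc hvc
      rcases T.anc_eq_or_properAnc hvc with rfl | h
      · exact hvout hc
      · exact hno c hc h
    -- u is a proper descendant of v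
    have hu' : T.ProperAnc u v := by
      rcases hT hadj with h | h
      · exact absurd h (notAncv u hu)
      · exact toProper u hu h
    -- every vertex of S is a proper descendant of v
    have hS : ∀ x ∈ S, T.ProperAnc x v := by
      intro x hx
      have hreach' := (hconn i) ⟨u, hu⟩ ⟨x, hx⟩
      obtain ⟨p⟩ := hreach'
      have walkstep : ∀ {a b : ↥S} (_ : (H i).coe.Walk a b),
          T.ProperAnc (a : V) v → T.ProperAnc (b : V) v := by
        intro a b p
        induction p with
        | nil => exact id
        | @cons a c b hac _ ih =>
          intro ha
          apply ih
          have hGadj : G.Adj (a : V) c := (H i).coe_adj_sub a c hac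
          have hcS : (c : V) ∈ S := c.2
          rcases hT hGadj with h | h
          · -- c is an ancestor of a; compare c and v
            rcases T.anc_total h ha.to_reflTransGen with h2 | h2
            · exact toProper c hcS h2
            · exact absurd h2 (notAncv c hcS)
          · exact toProper c hcS (h.trans ha.to_reflTransGen)
      exact walkstep p hu'
    -- build a treedepth decomposition of (H i).coe of small height
    have near : ∀ x : ↥S, (∃ y : ↥S, T.ProperAnc (x : V) y) →
        ∃ y : ↥S, T.ProperAnc (x : V) y ∧
          ∀ z : ↥S, T.ProperAnc (x : V) z → T.Anc (y : V) z := by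
      intro x hne
      obtain ⟨y, hy, hymax⟩ := Set.Finite.exists_maximalFor
        (fun y : ↥S => T.depth (y : V)) {y : ↥S | T.ProperAnc (x : V) y}
        (Set.toFinite _) hne
      refine ⟨y, hy, fun z hz => ?_⟩
      rcases T.anc_total hy.to_reflTransGen hz.to_reflTransGen with h | h
      · exact h
      · rcases T.anc_eq_or_properAnc h with h' | h'
        · exact h' ▸ Relation.ReflTransGen.refl
        · have hlt := T.properAnc_depth_lt h'
          have : T.depth (z : V) ≤ T.depth (y : V) := hymax (j := z) hz (le_of_lt hlt)
          omega
    set par : ↥S → Option ↥S :=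
      fun x => if h : ∃ y : ↥S, T.ProperAnc (x : V) y then some (near x h).choose
        else none with hpar_def
    have hpar : ∀ x y : ↥S, par x = some y → T.ProperAnc (x : V) y ∧
        ∀ z : ↥S, T.ProperAnc (x : V) z → T.Anc (y : V) z := by
      intro x y hxy
      simp only [hpar_def] at hxy
      split_ifs at hxy with h
      obtain rfl : (near x h).choose = y := Option.some.inj hxy
      exact (near x h).choose_spec
    have hpar2 : ∀ x y : ↥S, T.ProperAnc (x : V) y → ∃ z, par x = some z := by
      intro x y h
      simp only [hpar_def]
      rw [dif_pos ⟨y, h⟩]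
      exact ⟨_, rfl⟩
    have emb : ∀ {x y : ↥S}, Relation.TransGen (fun a b : ↥S => par a = some b) x y →
        T.ProperAnc (x : V) y := by
      intro x y h
      induction h with
      | single h => exact (hpar _ _ h).1
      | tail _ h ih => exact ih.trans (hpar _ _ h).1
    set Fi : RootedForest ↥S :=
      ⟨par, fun x hx => T.acyclic (x : V) (emb hx)⟩ with hFi_def
    have restrict : ∀ n (x y : ↥S), T.depth (x : V) ≤ n → T.ProperAnc (x : V) y →
        Fi.Anc x y := by
      intro n
      induction n with
      | zero =>
        intro x y h0 _
        have := T.depth_pos (x : V)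
        omega
      | succ n ih =>
        intro x y hdep hxy
        obtain ⟨z, hz⟩ := hpar2 x y hxy
        obtain ⟨h1, h2⟩ := hpar x z hz
        have hzy : T.Anc (z : V) y := h2 y hxy
        rcases T.anc_eq_or_properAnc hzy with h' | h'
        · have : z = y := Subtype.ext h'
          subst this
          exact Relation.ReflTransGen.single hz
        · have hlt := T.properAnc_depth_lt h1
          exact Relation.ReflTransGen.head hz (ih z y (by omega) h')
    have hdecomp : (H i).coe.IsTreedepthDecomp Fi := by
      intro a b hab
      have hGadj : G.Adj (a : V) b := (H i).coe_adj_sub a b hab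
      have hne : (a : V) ≠ b := hGadj.ne
      rcases hT hGadj with h | h
      · rcases T.anc_eq_or_properAnc h with h' | h'
        · exact absurd h' hne
        · exact Or.inl (restrict _ a b le_rfl h')
      · rcases T.anc_eq_or_properAnc h with h' | h'
        · exact absurd h'.symm hne
        · exact Or.inr (restrict _ b a le_rfl h')
    -- bound the height of Fi
    have hx_le : ∀ x : ↥S, Fi.depth x ≤ T.reach v := by
      intro x
      have hj : ∀ u : {u : ↥S // Fi.Anc x u}, T.Anc (x : V) (u : ↥S) ∧
          ¬ T.Anc v ((u : ↥S) : V) := by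
        rintro ⟨u, hu⟩
        constructor
        · rcases Relation.reflTransGen_iff_eq_or_transGen.mp hu with h' | h'
          · subst h'
            exact Relation.ReflTransGen.refl
          · exact (emb h').to_reflTransGen
        · exact notAncv _ u.2
      have hinj : Function.Injective
          (fun u : {u : ↥S // Fi.Anc x u} =>
            (⟨((u : ↥S) : V), (hj u).1, (hj u).2⟩ :
              {w : V // T.Anc (x : V) w ∧ ¬ T.Anc v w})) := by
        intro u1 u2 h
        simp only [Subtype.mk.injEq] at h
        exact Subtype.ext (Subtype.ext h)
      have hcard := Nat.card_le_card_of_injective _ hinj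
      have heq : Nat.card {w : V // T.Anc (x : V) w ∧ ¬ T.Anc v w} =
          ({w : V | T.Anc (x : V) w} \ {w : V | T.Anc v w}).ncard := by
        rw [← Nat.card_coe_set_eq]
        congr 1
      have hsub : {w : V | T.Anc v w} ⊆ {w : V | T.Anc (x : V) w} := by
        intro w hw
        exact ((hS x x.2).to_reflTransGen).trans hw
      have hdiff : ({w : V | T.Anc (x : V) w} \ {w : V | T.Anc v w}).ncard =
          T.depth (x : V) - T.depth v := by
        rw [Set.ncard_diff hsub (Set.toFinite _), ← T.depth_eq_ncard, ← T.depth_eq_ncard]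
      have hle : T.depth (x : V) ≤ T.height := T.depth_le_height _
      have : Fi.depth x ≤ T.depth (x : V) - T.depth v := by
        calc Fi.depth x ≤ _ := hcard
          _ = _ := heq
          _ = _ := hdiff
      unfold RootedForest.reach
      omega
    have hheight : Fi.height ≤ T.reach v := by
      apply csSup_le'
      rintro _ ⟨x, rfl⟩
      exact hx_le x
    have htd' : (H i).coe.treedepth ≤ Fi.height :=
      Nat.sInf_le ⟨Fi, hdecomp, rfl⟩
    have := htd i
    omega
  -- Step B: conclude
  choose w hw hwp using key
  have hinj : Function.Injective
      (fun o : Option (Fin t) => (⟨o.elim v w, by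
        cases o with
        | none => exact Relation.ReflTransGen.refl
        | some i => exact (hwp i).to_reflTransGen⟩ : {u : V // T.Anc v u})) := by
    intro o1 o2 h
    simp only [Subtype.mk.injEq] at h
    cases o1 with
    | none =>
      cases o2 with
      | none => rfl
      | some j =>
        simp only [Option.elim] at h
        exact absurd (hw j) (by rw [← h]; exact (hv j).1)
    | some i =>
      cases o2 with
      | none =>
        simp only [Option.elim] at h
        exact absurd (hw i) (by rw [h]; exact (hv i).1)
      | some j =>
        simp only [Option.elim] at h
        congr
        by_contra hij
        have hd := Set.disjoint_left.mp (hdisj hij) (hw i)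
        rw [h] at hd
        exact hd (hw j)
  have hcard := Nat.card_le_card_of_injective _ hinj
  have h1 : Nat.card (Option (Fin t)) = t + 1 := by
    simp [Nat.card_eq_fintype_card]
  have h2 : T.depth v ≤ T.height := T.depth_le_height v
  have : Nat.card {u : V // T.Anc v u} = T.depth v := rfl
  omega
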